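/- Let 1 ≤ k ≤ n-1 and let C = (c_{ij}) ∈ Mat_n(F) be a matrix all of whose entries are nonzero such that C ∘ A ∈ Λ^{≤k} for every A ∈ Λ^{≤k}, where ∘ denotes the Hadamard (entrywise) product. Then there exist nonzero elements d_{1,1}, ..., d_{1,n}, d_{2,1}, ..., d_{2,n} ∈ F such that c_{ij} = d_{1,i} · d_{2,j} for all i, j; in particular C has rank 1. -/

import Mathlib

open Matrix

/-- The permanental rank of a square matrix: the size of the largest square
submatrix with nonzero permanent. -/
noncomputable def prk {n : ℕ} {F : Type*} [Field F] (A : Matrix (Fin n) (Fin n) F) : ℕ :=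
  sSup {k | ∃ r c : Fin k → Fin n, Function.Injective r ∧ Function.Injective c ∧
    (A.submatrix r c).permanent ≠ 0}

/-- The permutation matrix of `σ`: its `(i,j)` entry is `1` if `j = σ⁻¹ i` and `0` otherwise. -/
def permMat {n : ℕ} (F : Type*) [Field F] (σ : Equiv.Perm (Fin n)) :
    Matrix (Fin n) (Fin n) F :=
  Matrix.of fun i j => if j = σ⁻¹ i then (1 : F) else 0

section Helpers

variable {F : Type*} [Field F]

lemma perm_zero_row {m : ℕ} (E : Matrix (Fin m) (Fin m) F) (i : Fin m)
    (h : ∀ j, E i j = 0) : E.permanent = 0 := by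
  unfold Matrix.permanent
  refine Finset.sum_eq_zero fun σ _ => ?_
  refine Finset.prod_eq_zero (Finset.mem_univ (σ⁻¹ i)) ?_
  rw [← Equiv.Perm.mul_apply, mul_inv_cancel, Equiv.Perm.one_apply]
  exact h _

lemma perm_zero_col {m : ℕ} (E : Matrix (Fin m) (Fin m) F) (j : Fin m)
    (h : ∀ i, E i j = 0) : E.permanent = 0 := by
  unfold Matrix.permanent
  refine Finset.sum_eq_zero fun σ _ => ?_
  exact Finset.prod_eq_zero (Finset.mem_univ j) (h _)

lemma perm_sparse {m : ℕ} (E : Matrix (Fin m) (Fin m) F) (z0 z1 : Fin m)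
    (h0 : (z0 : ℕ) = 0) (h1 : (z1 : ℕ) = 1)
    (hE : ∀ i j : Fin m, i ≠ j → ¬((i : ℕ) < 2 ∧ (j : ℕ) < 2) → E i j = 0) :
    E.permanent = (E z0 z0 * E z1 z1 + E z0 z1 * E z1 z0) *
      ∏ i ∈ Finset.univ.filter (fun i : Fin m => 2 ≤ (i : ℕ)), E i i := by
  have hz : z0 ≠ z1 := by
    intro h; have := congrArg Fin.val h; omega
  have mem2 : ∀ x : Fin m, (x : ℕ) < 2 → x = z0 ∨ x = z1 := by
    intro x hx
    have hx' : (x : ℕ) = 0 ∨ (x : ℕ) = 1 := by omega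
    rcases hx' with h | h
    · left; exact Fin.ext (by omega)
    · right; exact Fin.ext (by omega)
  have key : ∀ σ : Equiv.Perm (Fin m), σ ≠ 1 → σ ≠ Equiv.swap z0 z1 →
      (∏ j, E (σ j) j) = 0 := by
    intro σ hσ1 hσ2
    by_contra hp
    have hnz : ∀ j, E (σ j) j ≠ 0 := by
      intro j hj; exact hp (Finset.prod_eq_zero (Finset.mem_univ j) hj)
    have hfix : ∀ j : Fin m, 2 ≤ (j : ℕ) → σ j = j := by
      intro j hj
      by_contra hne
      exact hnz j (hE _ _ hne (by omega))
    have hv0 : ((σ z0 : Fin m) : ℕ) < 2 := by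
      by_contra h
      push_neg at h
      have h4 := σ.injective (hfix (σ z0) h)
      have := congrArg Fin.val h4
      omega
    have hv1 : ((σ z1 : Fin m) : ℕ) < 2 := by
      by_contra h
      push_neg at h
      have h4 := σ.injective (hfix (σ z1) h)
      have := congrArg Fin.val h4
      omega
    rcases mem2 _ hv0 with ha | ha
    · have hb : σ z1 = z1 := by
        rcases mem2 _ hv1 with hb | hb
        · exact absurd (σ.injective (ha.trans hb.symm)) hz
        · exact hb
      apply hσ1
      apply Equiv.ext
      intro j
      simp only [Equiv.Perm.coe_one, id_eq]
      by_cases h2 : 2 ≤ (j : ℕ)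
      · exact hfix j h2
      · rcases mem2 j (by omega) with rfl | rfl
        · exact ha
        · exact hb
    · have hb : σ z1 = z0 := by
        rcases mem2 _ hv1 with hb | hb
        · exact hb
        · exact absurd (σ.injective (ha.trans hb.symm)) hz
      apply hσ2
      apply Equiv.ext
      intro j
      by_cases h2 : 2 ≤ (j : ℕ)
      · rw [hfix j h2]
        have hj0 : j ≠ z0 := by intro hh; subst hh; omega
        have hj1 : j ≠ z1 := by intro hh; subst hh; omega
        exact (Equiv.swap_apply_of_ne_of_ne hj0 hj1).symm
      · rcases mem2 j (by omega) with rfl | rfl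
        · rw [ha, Equiv.swap_apply_left]
        · rw [hb, Equiv.swap_apply_right]
  have hswap_ne : (1 : Equiv.Perm (Fin m)) ≠ Equiv.swap z0 z1 := by
    intro h
    have h2 : z0 = Equiv.swap z0 z1 z0 := by rw [← h]; rfl
    rw [Equiv.swap_apply_left] at h2
    exact hz h2
  have hsum : E.permanent =
      ∑ σ ∈ ({1, Equiv.swap z0 z1} : Finset (Equiv.Perm (Fin m))), ∏ j, E (σ j) j := by
    rw [Matrix.permanent]
    refine (Finset.sum_subset (Finset.subset_univ _) (fun σ _ hσ => ?_)).symm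
    simp only [Finset.mem_insert, Finset.mem_singleton] at hσ
    push_neg at hσ
    exact key σ hσ.1 hσ.2
  rw [hsum, Finset.sum_pair hswap_ne]
  set s := Finset.univ.filter (fun i : Fin m => 2 ≤ (i : ℕ)) with hs
  have hz1s : z1 ∉ s := by
    simp only [hs, Finset.mem_filter, Finset.mem_univ, true_and]
    omega
  have hz0s : z0 ∉ insert z1 s := by
    simp only [Finset.mem_insert, hs, Finset.mem_filter, Finset.mem_univ, true_and]
    push_neg
    exact ⟨hz, by omega⟩
  have huniv : (Finset.univ : Finset (Fin m)) = insert z0 (insert z1 s) := by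
    ext x
    simp only [Finset.mem_univ, true_iff, Finset.mem_insert, hs, Finset.mem_filter, true_and]
    by_cases hx : 2 ≤ (x : ℕ)
    · right; right; exact hx
    · rcases mem2 x (by omega) with h | h
      · left; exact h
      · right; left; exact h
  have e1 : (∏ j, E ((1 : Equiv.Perm (Fin m)) j) j) = E z0 z0 * (E z1 z1 * ∏ j ∈ s, E j j) := by
    simp only [Equiv.Perm.coe_one, id_eq]
    rw [huniv, Finset.prod_insert hz0s, Finset.prod_insert hz1s]
  have e2 : (∏ j, E ((Equiv.swap z0 z1) j) j)
      = E z1 z0 * (E z0 z1 * ∏ j ∈ s, E j j) := by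
    rw [huniv, Finset.prod_insert hz0s, Finset.prod_insert hz1s,
      Equiv.swap_apply_left, Equiv.swap_apply_right]
    congr 2
    refine Finset.prod_congr rfl fun j hj => ?_
    simp only [hs, Finset.mem_filter, Finset.mem_univ, true_and] at hj
    have hj0 : j ≠ z0 := by intro hh; subst hh; omega
    have hj1 : j ≠ z1 := by intro hh; subst hh; omega
    rw [Equiv.swap_apply_of_ne_of_ne hj0 hj1]
  rw [e1, e2]
  ring

lemma prk_le {n : ℕ} (A : Matrix (Fin n) (Fin n) F) (k : ℕ)
    (h : ∀ (m : ℕ) (r c : Fin m → Fin n), Function.Injective r → Function.Injective c →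
        (A.submatrix r c).permanent ≠ 0 → m ≤ k) : prk A ≤ k := by
  refine csSup_le' ?_
  rintro m ⟨r, c, hr, hc, hp⟩
  exact h m r c hr hc hp

lemma le_prk {n : ℕ} (A : Matrix (Fin n) (Fin n) F) (m : ℕ) (r c : Fin m → Fin n)
    (hr : Function.Injective r) (hc : Function.Injective c)
    (hp : (A.submatrix r c).permanent ≠ 0) : m ≤ prk A := by
  refine le_csSup ⟨n, ?_⟩ ⟨r, c, hr, hc, hp⟩
  rintro m' ⟨r', _, hr', _, _⟩
  have := Fintype.card_le_of_injective r' hr'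
  simpa using this

/-- The core test matrix. -/
def Mc (F : Type*) [Field F] (n k : ℕ) : Matrix (Fin n) (Fin n) F :=
  Matrix.of fun a b =>
    if (a : ℕ) = 0 ∧ (b : ℕ) = 0 then 1
    else if (a : ℕ) = 0 ∧ (b : ℕ) = 1 then 1
    else if (a : ℕ) = 1 ∧ (b : ℕ) = 0 then 1
    else if (a : ℕ) = 1 ∧ (b : ℕ) = 1 then -1
    else if (a : ℕ) = (b : ℕ) ∧ 2 ≤ (a : ℕ) ∧ (a : ℕ) < k + 1 then 1 else 0

variable {n k : ℕ}

lemma Mc_row_zero (hk : 1 ≤ k) (a b : Fin n) (ha : k + 1 ≤ (a : ℕ)) :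
    Mc F n k a b = 0 := by
  simp only [Mc, Matrix.of_apply]
  split_ifs <;> first | rfl | (exfalso; omega)

lemma Mc_col_zero (hk : 1 ≤ k) (a b : Fin n) (hb : k + 1 ≤ (b : ℕ)) :
    Mc F n k a b = 0 := by
  simp only [Mc, Matrix.of_apply]
  split_ifs <;> first | rfl | (exfalso; omega)

lemma Mc_zero (a b : Fin n) (hab : (a : ℕ) ≠ (b : ℕ))
    (h2 : ¬((a : ℕ) < 2 ∧ (b : ℕ) < 2)) : Mc F n k a b = 0 := by
  simp only [Mc, Matrix.of_apply]
  split_ifs <;> first | rfl | (exfalso; omega)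

lemma Mc_00 (a b : Fin n) (ha : (a : ℕ) = 0) (hb : (b : ℕ) = 0) : Mc F n k a b = 1 := by
  simp only [Mc, Matrix.of_apply, ha, hb]
  norm_num

lemma Mc_01 (a b : Fin n) (ha : (a : ℕ) = 0) (hb : (b : ℕ) = 1) : Mc F n k a b = 1 := by
  simp only [Mc, Matrix.of_apply, ha, hb]
  norm_num

lemma Mc_10 (a b : Fin n) (ha : (a : ℕ) = 1) (hb : (b : ℕ) = 0) : Mc F n k a b = 1 := by
  simp only [Mc, Matrix.of_apply, ha, hb]
  norm_num

lemma Mc_11 (a b : Fin n) (ha : (a : ℕ) = 1) (hb : (b : ℕ) = 1) : Mc F n k a b = -1 := by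
  simp only [Mc, Matrix.of_apply, ha, hb]
  norm_num

lemma Mc_diag (a b : Fin n) (hab : (a : ℕ) = (b : ℕ)) (h2 : 2 ≤ (a : ℕ))
    (hlt : (a : ℕ) < k + 1) : Mc F n k a b = 1 := by
  simp only [Mc, Matrix.of_apply]
  rw [if_neg (by omega), if_neg (by omega), if_neg (by omega), if_neg (by omega),
    if_pos ⟨hab, h2, hlt⟩]

lemma rel_aux {n : ℕ} {F : Type*} [Field F] (hn : 3 ≤ n)
    (k : ℕ) (hk1 : 1 ≤ k) (hk2 : k ≤ n - 1)
    (C : Matrix (Fin n) (Fin n) F) (hC : ∀ i j, C i j ≠ 0)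
    (hpres : ∀ A : Matrix (Fin n) (Fin n) F, prk A ≤ k → prk (C.hadamard A) ≤ k)
    (i1 i2 j1 j2 : Fin n) (hi : i1 ≠ i2) (hj : j1 ≠ j2) :
    C i1 j1 * C i2 j2 = C i1 j2 * C i2 j1 := by
  have hkn : k + 1 ≤ n := by omega
  set e0 : Fin n := ⟨0, by omega⟩ with he0
  set e1 : Fin n := ⟨1, by omega⟩ with he1
  have he01 : e0 ≠ e1 := by
    intro h; have := congrArg Fin.val h; simp [he0, he1] at this
  -- build row permutation σ with σ e0 = i1, σ e1 = i2
  obtain ⟨σ, hσ0, hσ1⟩ : ∃ σ : Equiv.Perm (Fin n), σ e0 = i1 ∧ σ e1 = i2 := by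
    refine ⟨(Equiv.swap e0 i1).trans (Equiv.swap ((Equiv.swap e0 i1) e1) i2), ?_, ?_⟩
    · show Equiv.swap ((Equiv.swap e0 i1) e1) i2 ((Equiv.swap e0 i1) e0) = i1
      rw [Equiv.swap_apply_left]
      refine Equiv.swap_apply_of_ne_of_ne ?_ hi
      intro h
      have : (Equiv.swap e0 i1) e0 = (Equiv.swap e0 i1) e1 := by
        rw [Equiv.swap_apply_left]; exact h
      exact he01 ((Equiv.swap e0 i1).injective this)
    · exact Equiv.swap_apply_left _ _
  obtain ⟨π, hπ0, hπ1⟩ : ∃ π : Equiv.Perm (Fin n), π e0 = j1 ∧ π e1 = j2 := by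
    refine ⟨(Equiv.swap e0 j1).trans (Equiv.swap ((Equiv.swap e0 j1) e1) j2), ?_, ?_⟩
    · show Equiv.swap ((Equiv.swap e0 j1) e1) j2 ((Equiv.swap e0 j1) e0) = j1
      rw [Equiv.swap_apply_left]
      refine Equiv.swap_apply_of_ne_of_ne ?_ hj
      intro h
      have : (Equiv.swap e0 j1) e0 = (Equiv.swap e0 j1) e1 := by
        rw [Equiv.swap_apply_left]; exact h
      exact he01 ((Equiv.swap e0 j1).injective this)
    · exact Equiv.swap_apply_left _ _
  set A : Matrix (Fin n) (Fin n) F := (Mc F n k).submatrix σ.symm π.symm with hA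
  -- permanent is invariant under permuting rows and columns
  have hps : ∀ (N : Matrix (Fin (k+1)) (Fin (k+1)) F) (ρ γ : Equiv.Perm (Fin (k+1))),
      (N.submatrix ρ γ).permanent = N.permanent := by
    intro N ρ γ
    have h1 : N.submatrix ρ γ = (N.submatrix ρ id).submatrix id γ := by
      rw [Matrix.submatrix_submatrix]
      simp
    rw [h1, Matrix.permanent_permute_rows, Matrix.permanent_permute_cols]
  have z0lt : (0 : ℕ) < k + 1 := by omega
  have z1lt : (1 : ℕ) < k + 1 := by omega
  set z0 : Fin (k+1) := ⟨0, z0lt⟩ with hz0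
  set z1 : Fin (k+1) := ⟨1, z1lt⟩ with hz1
  -- prk A ≤ k
  have hAk : prk A ≤ k := by
    refine prk_le A k ?_
    intro m r c hr hc hp
    by_contra hmk
    push_neg at hmk
    apply hp
    have hsub : A.submatrix r c = (Mc F n k).submatrix (σ.symm ∘ r) (π.symm ∘ c) := by
      rw [hA, Matrix.submatrix_submatrix]
    rw [hsub]
    by_cases hrow : ∃ i, k + 1 ≤ ((σ.symm (r i) : Fin n) : ℕ)
    · obtain ⟨i, hi'⟩ := hrow
      exact perm_zero_row _ i (fun j => Mc_row_zero hk1 _ _ hi')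
    by_cases hcol : ∃ j, k + 1 ≤ ((π.symm (c j) : Fin n) : ℕ)
    · obtain ⟨j, hj'⟩ := hcol
      exact perm_zero_col _ j (fun i => Mc_col_zero hk1 _ _ hj')
    push_neg at hrow hcol
    set r'' : Fin m → Fin (k+1) := fun i => ⟨(σ.symm (r i) : Fin n), hrow i⟩ with hr''def
    set c'' : Fin m → Fin (k+1) := fun j => ⟨(π.symm (c j) : Fin n), hcol j⟩ with hc''def
    have hr'' : Function.Injective r'' := by
      intro a b hab
      have hv := congrArg Fin.val hab
      exact hr (σ.symm.injective (Fin.ext hv))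
    have hc'' : Function.Injective c'' := by
      intro a b hab
      have hv := congrArg Fin.val hab
      exact hc (π.symm.injective (Fin.ext hv))
    have hm' : m ≤ k + 1 := by
      have := Fintype.card_le_of_injective r'' hr''
      simpa using this
    have hm : m = k + 1 := by omega
    subst hm
    set ρ : Equiv.Perm (Fin (k+1)) := Equiv.ofBijective r'' (Finite.injective_iff_bijective.mp hr'')
    set γ : Equiv.Perm (Fin (k+1)) := Equiv.ofBijective c'' (Finite.injective_iff_bijective.mp hc'')
    have hrw : (Mc F n k).submatrix (σ.symm ∘ r) (π.symm ∘ c)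
        = ((Mc F n k).submatrix (Fin.castLE hkn) (Fin.castLE hkn)).submatrix ρ γ := by
      ext i j
      simp only [Matrix.submatrix_apply, Function.comp_apply, ρ, γ, Equiv.ofBijective_apply]
      congr 1 <;> exact (Fin.ext rfl)
    rw [hrw, hps]
    rw [perm_sparse _ z0 z1 rfl rfl ?_]
    · rw [Matrix.submatrix_apply, Matrix.submatrix_apply, Matrix.submatrix_apply,
        Matrix.submatrix_apply,
        Mc_00 _ _ rfl rfl, Mc_11 _ _ rfl rfl, Mc_01 _ _ rfl rfl, Mc_10 _ _ rfl rfl]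
      ring
    · intro i j hij h2
      rw [Matrix.submatrix_apply]
      refine Mc_zero _ _ ?_ ?_
      · simpa using fun h => hij (Fin.ext h)
      · simpa using h2
  -- now use hpres
  have hCAk : prk (C.hadamard A) ≤ k := hpres A hAk
  by_contra hne
  have hgood : k + 1 ≤ prk (C.hadamard A) := by
    refine le_prk _ (k+1) (fun i => σ (Fin.castLE hkn i)) (fun j => π (Fin.castLE hkn j))
      (σ.injective.comp (Fin.castLE_injective hkn))
      (π.injective.comp (Fin.castLE_injective hkn)) ?_
    set E := (C.hadamard A).submatrix (fun i => σ (Fin.castLE hkn i))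
      (fun j => π (Fin.castLE hkn j)) with hE
    have hEapp : ∀ i j : Fin (k+1),
        E i j = C (σ (Fin.castLE hkn i)) (π (Fin.castLE hkn j))
          * Mc F n k (Fin.castLE hkn i) (Fin.castLE hkn j) := by
      intro i j
      simp only [hE, Matrix.submatrix_apply, Matrix.hadamard_apply, hA,
        Equiv.symm_apply_apply]
    rw [perm_sparse E z0 z1 rfl rfl ?_]
    · have hc0 : Fin.castLE hkn z0 = e0 := Fin.ext rfl
      have hc1 : Fin.castLE hkn z1 = e1 := Fin.ext rfl
      have h00 : E z0 z0 = C i1 j1 := by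
        rw [hEapp, Mc_00 _ _ rfl rfl, hc0, hσ0, hπ0, mul_one]
      have h11 : E z1 z1 = -(C i2 j2) := by
        rw [hEapp, Mc_11 _ _ rfl rfl, hc1, hσ1, hπ1]
        ring
      have h01 : E z0 z1 = C i1 j2 := by
        rw [hEapp, Mc_01 _ _ rfl rfl, hc0, hc1, hσ0, hπ1, mul_one]
      have h10 : E z1 z0 = C i2 j1 := by
        rw [hEapp, Mc_10 _ _ rfl rfl, hc0, hc1, hσ1, hπ0, mul_one]
      rw [h00, h11, h01, h10]
      refine mul_ne_zero ?_ ?_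
      · intro h
        apply hne
        have : C i1 j2 * C i2 j1 - C i1 j1 * C i2 j2 = 0 := by
          rw [← h]; ring
        have := sub_eq_zero.mp this
        exact this.symm
      · rw [Finset.prod_ne_zero_iff]
        intro i hi'
        simp only [Finset.mem_filter, Finset.mem_univ, true_and] at hi'
        rw [hEapp, Mc_diag _ _ rfl (by simpa using hi') (by simp; omega), mul_one]
        exact hC _ _
    · intro i j hij h2
      rw [hEapp, Mc_zero _ _ (by simpa using fun h => hij (Fin.ext h)) (by simpa using h2),
        mul_zero]
  omega

end Helpers

theorem stmt_17 {n : ℕ} {F : Type*} [Field F] (hn : 3 ≤ n) (hchar : (2 : F) ≠ 0)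
    (k : ℕ) (hk1 : 1 ≤ k) (hk2 : k ≤ n - 1)
    (C : Matrix (Fin n) (Fin n) F) (hC : ∀ i j, C i j ≠ 0)
    (hpres : ∀ A : Matrix (Fin n) (Fin n) F, prk A ≤ k → prk (C.hadamard A) ≤ k) :
    ∃ d1 d2 : Fin n → F,
      (∀ i, d1 i ≠ 0) ∧ (∀ j, d2 j ≠ 0) ∧ (∀ i j, C i j = d1 i * d2 j) ∧ C.rank = 1 := by
  have rel := rel_aux hn k hk1 hk2 C hC hpres
  set z : Fin n := ⟨0, by omega⟩ with hz
  refine ⟨fun i => C i z, fun j => C z j * (C z z)⁻¹, fun i => hC i z,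
    fun j => mul_ne_zero (hC z j) (inv_ne_zero (hC z z)), ?_, ?_⟩
  · intro i j
    by_cases hiz : i = z
    · subst hiz
      have h0 : C z z ≠ 0 := hC z z
      field_simp
    · by_cases hjz : j = z
      · subst hjz
        have h0 : C z z ≠ 0 := hC z z
        field_simp
      · have h := rel i z j z hiz hjz
        have h0 := hC z z
        field_simp
        linear_combination h
  · have hmul : ∀ i j, C i j = C i z * (C z j * (C z z)⁻¹) := by
      intro i j
      by_cases hiz : i = z
      · subst hiz
        have h0 : C z z ≠ 0 := hC z z
        field_simp
      · by_cases hjz : j = z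
        · subst hjz
          have h0 : C z z ≠ 0 := hC z z
          field_simp
        · have h := rel i z j z hiz hjz
          have h0 := hC z z
          field_simp
          linear_combination h
    have hCeq : C = Matrix.vecMulVec (fun i => C i z) (fun j => C z j * (C z z)⁻¹) := by
      ext i j
      rw [Matrix.vecMulVec_apply]
      exact hmul i j
    have hle : C.rank ≤ 1 := by
      rw [hCeq, Matrix.vecMulVec_eq Unit]
      refine le_trans (Matrix.rank_mul_le_left _ _) ?_
      have := Matrix.rank_le_card_width (Matrix.replicateCol Unit (fun i => C i z))
      simpa using this
    have hne0 : C.rank ≠ 0 := by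
      intro h
      have hbot : LinearMap.range C.mulVecLin = ⊥ := by
        rw [Matrix.rank] at h
        exact Submodule.finrank_eq_zero.mp h
      have h2 : C.mulVec (Pi.single z 1) = 0 := by
        have hmem : C.mulVec (Pi.single z 1) ∈ LinearMap.range C.mulVecLin :=
          ⟨Pi.single z 1, rfl⟩
        rw [hbot] at hmem
        simpa using hmem
      have h3 := congrFun h2 z
      rw [Matrix.mulVec_single] at h2
      have h4 := congrFun h2 z
      simp only [Pi.zero_apply, mul_one, MulOpposite.op_one, one_smul, Matrix.col_apply] at h4
      exact hC z z h4
    omega
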